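/- There are exactly 8 weighted games with 3 voters up to relabeling of voters with non-increasing weights, represented by [1;1,0,0], [1;1,1,0], [2;1,1,0], [1;1,1,1], [2;1,1,1], [3;1,1,1], [2;2,1,1], [3;2,1,1]; moreover every simple game on 3 voters equals one of these up to a permutation of the voters. -/
import Mathlib


open Finset

def IsSimpleGame {n : ℕ} (v : Finset (Fin n) → ℕ) : Prop :=
  (∀ S, v S = 0 ∨ v S = 1) ∧ (∀ S T : Finset (Fin n), S ⊆ T → v S ≤ v T) ∧
    (∃ S, v S = 0) ∧ (∃ S, v S = 1)

def IsWeighted {n : ℕ} (v : Finset (Fin n) → ℕ) : Prop :=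
  ∃ (w : Fin n → ℝ) (q : ℝ), (∀ i, 0 ≤ w i) ∧ 0 < q ∧
    ∀ S : Finset (Fin n), v S = 1 ↔ q ≤ ∑ i ∈ S, w i

noncomputable def wg {n : ℕ} (q : ℝ) (w : Fin n → ℝ) (S : Finset (Fin n)) : ℕ :=
  if q ≤ ∑ i ∈ S, w i then 1 else 0

def Dominates {n : ℕ} (v : Finset (Fin n) → ℕ) (i j : Fin n) : Prop :=
  ∀ S : Finset (Fin n), i ∉ S → j ∉ S → v (insert j S) ≤ v (insert i S)

noncomputable def SSI {n : ℕ} (v : Finset (Fin n) → ℕ) (i : Fin n) : ℝ :=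
  ∑ S ∈ (univ.erase i).powerset,
    ((S.card.factorial * (n - S.card - 1).factorial : ℕ) : ℝ) / (n.factorial : ℝ) *
      ((v (insert i S) : ℝ) - (v S : ℝ))

def eta {n : ℕ} (v : Finset (Fin n) → ℕ) (i : Fin n) : ℤ :=
  ∑ S ∈ (univ.erase i).powerset, ((v (insert i S) : ℤ) - (v S : ℤ))

noncomputable def PBI {n : ℕ} (v : Finset (Fin n) → ℕ) (i : Fin n) : ℝ :=
  ((eta v i : ℤ) : ℝ) / ∑ j, ((eta v j : ℤ) : ℝ)

noncomputable def G : Fin 8 → (Finset (Fin 3) → ℕ) :=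
  ![wg 1 ![1,0,0], wg 1 ![1,1,0], wg 2 ![1,1,0], wg 1 ![1,1,1],
    wg 2 ![1,1,1], wg 3 ![1,1,1], wg 2 ![2,1,1], wg 3 ![2,1,1]]

/-- Natural-number quotas of the eight games. -/
def Qn : Fin 8 → ℕ := ![1,1,2,1,2,3,2,3]

/-- Natural-number weights of the eight games. -/
def Wn : Fin 8 → Fin 3 → ℕ :=
  ![![1,0,0],![1,1,0],![1,1,0],![1,1,1],![1,1,1],![1,1,1],![2,1,1],![2,1,1]]

/-- Computable version of `G`. -/
def Gn (a : Fin 8) (S : Finset (Fin 3)) : ℕ := if Qn a ≤ ∑ i ∈ S, Wn a i then 1 else 0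

theorem wg_nat' (q : ℕ) (qr : ℝ) (hq : qr = q) (w : Fin 3 → ℕ) (wr : Fin 3 → ℝ)
    (hw : ∀ i, wr i = w i) (S : Finset (Fin 3)) :
    wg qr wr S = if q ≤ ∑ i ∈ S, w i then 1 else 0 := by
  unfold wg
  rw [hq, Finset.sum_congr rfl fun i _ => hw i, ← Nat.cast_sum, if_congr Nat.cast_le rfl rfl]

theorem GeqGn : ∀ a S, G a S = Gn a S := by
  intro a S
  fin_cases a
  · exact (wg_nat' 1 1 (by norm_num) ![1,0,0] ![1,0,0]
      (fun i => by fin_cases i <;> norm_num) S).trans rfl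
  · exact (wg_nat' 1 1 (by norm_num) ![1,1,0] ![1,1,0]
      (fun i => by fin_cases i <;> norm_num) S).trans rfl
  · exact (wg_nat' 2 2 (by norm_num) ![1,1,0] ![1,1,0]
      (fun i => by fin_cases i <;> norm_num) S).trans rfl
  · exact (wg_nat' 1 1 (by norm_num) ![1,1,1] ![1,1,1]
      (fun i => by fin_cases i <;> norm_num) S).trans rfl
  · exact (wg_nat' 2 2 (by norm_num) ![1,1,1] ![1,1,1]
      (fun i => by fin_cases i <;> norm_num) S).trans rfl
  · exact (wg_nat' 3 3 (by norm_num) ![1,1,1] ![1,1,1]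
      (fun i => by fin_cases i <;> norm_num) S).trans rfl
  · exact (wg_nat' 2 2 (by norm_num) ![2,1,1] ![2,1,1]
      (fun i => by fin_cases i <;> norm_num) S).trans rfl
  · exact (wg_nat' 3 3 (by norm_num) ![2,1,1] ![2,1,1]
      (fun i => by fin_cases i <;> norm_num) S).trans rfl

theorem wg_weighted {n : ℕ} (q : ℝ) (w : Fin n → ℝ) (h0 : ∀ i, 0 ≤ w i) (hq : 0 < q) :
    IsWeighted (wg q w) :=
  ⟨w, q, h0, hq, fun S => by unfold wg; split_ifs with h <;> simp [h]⟩

theorem key2 : ∀ a b : Fin 8,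
    (∃ σ : Equiv.Perm (Fin 3), ∀ S, Gn a S = Gn b (S.image σ)) → a = b := by decide

set_option maxRecDepth 10000 in
theorem key3 : ∀ f : Finset (Fin 3) → Bool,
    (∀ S T, S ⊆ T → f S = true → f T = true) →
    (∃ S, f S = false) → (∃ S, f S = true) →
    ∃ a : Fin 8, ∃ σ : Equiv.Perm (Fin 3), ∀ S,
      (if f S then 1 else 0) = Gn a (S.image σ) := by decide

theorem stmt17 :
    (∀ a : Fin 8, IsWeighted (G a)) ∧
    (∀ a b : Fin 8, (∃ σ : Equiv.Perm (Fin 3), ∀ S, G a S = G b (S.image σ)) → a = b) ∧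
    (∀ v : Finset (Fin 3) → ℕ, IsSimpleGame v →
      ∃ a : Fin 8, ∃ σ : Equiv.Perm (Fin 3), ∀ S, v S = G a (S.image σ)) := by
  refine ⟨?_, ?_, ?_⟩
  · intro a
    fin_cases a <;>
      exact wg_weighted _ _ (fun i => by fin_cases i <;> norm_num) (by norm_num)
  · intro a b ⟨σ, hσ⟩
    exact key2 a b ⟨σ, fun S => by rw [← GeqGn, ← GeqGn]; exact hσ S⟩
  · intro v ⟨h01, hmono, ⟨S0, hS0⟩, ⟨S1, hS1⟩⟩
    set f : Finset (Fin 3) → Bool := fun S => decide (v S = 1) with hf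
    have hv : ∀ S, v S = if f S then 1 else 0 := by
      intro S
      simp only [hf]
      rcases h01 S with h | h <;> simp [h]
    obtain ⟨a, σ, hg⟩ := key3 f
      (fun S T hST hfS => by
        simp only [hf, decide_eq_true_eq] at *
        have := hmono S T hST
        rcases h01 T with h | h
        · omega
        · exact h)
      ⟨S0, by simp [hf, hS0]⟩ ⟨S1, by simp [hf, hS1]⟩
    exact ⟨a, σ, fun S => by rw [hv S, GeqGn]; exact hg S⟩
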